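/- Let q ≥ 2 be an integer and let j = ω(q^5 − 1). For i ≥ 1 let s_i denote the i-th smallest prime not congruent to 1 modulo 10, and let r_i denote the i-th smallest prime congruent to 1 modulo 10. Then q ≥ min over 0 ≤ m ≤ j of max{ s_1⋯s_m + 1 , (s_1⋯s_m · r_1⋯r_{j−m} + 1)^{1/5} }, where empty products equal 1 and the 1/5-th power is a real power. -/
import Mathlib

open Finset

lemma prod_nth_le (p : ℕ → Prop) [DecidablePred p] :
    ∀ (S : Finset ℕ), (∀ x ∈ S, p x) →
      ∏ i ∈ Finset.range S.card, Nat.nth p i ≤ ∏ x ∈ S, x := by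
  intro S
  induction S using Finset.strongInduction with
  | _ S ih =>
    intro hS
    rcases S.eq_empty_or_nonempty with rfl | hne
    · simp
    · set M := S.max' hne with hM
      have hMS : M ∈ S := S.max'_mem hne
      have hpos : 0 < S.card := Finset.card_pos.2 hne
      have hcard : S.card = (S.erase M).card + 1 := by
        rw [Finset.card_erase_of_mem hMS]
        omega
      have hnth : Nat.nth p (S.erase M).card < M + 1 := by
        apply Nat.nth_lt_of_lt_count
        rw [Nat.count_eq_card_filter_range]
        have hsub : S ⊆ (Finset.range (M + 1)).filter (fun x => p x) := by
          intro x hx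
          simp only [Finset.mem_filter, Finset.mem_range]
          exact ⟨Nat.lt_succ_of_le (S.le_max' x hx), hS x hx⟩
        have := Finset.card_le_card hsub
        omega
      rw [hcard, Finset.prod_range_succ, ← Finset.prod_erase_mul S _ hMS]
      exact Nat.mul_le_mul (ih _ (Finset.erase_ssubset hMS)
        (fun x hx => hS x (Finset.mem_of_mem_erase hx))) (by omega)

lemma dvd_q_sub_one {q p : ℕ} (hq : 2 ≤ q) (hp : p.Prime) (hdvd : p ∣ q ^ 5 - 1)
    (hmod : p % 10 ≠ 1) : p ∣ q - 1 := by
  haveI : Fact p.Prime := ⟨hp⟩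
  have hq5 : 1 ≤ q ^ 5 := Nat.one_le_pow _ _ (by omega)
  have h1 : ((q : ZMod p)) ^ 5 = 1 := by
    have := (ZMod.natCast_eq_zero_iff _ _).2 hdvd
    rw [Nat.cast_sub hq5] at this
    push_cast at this
    linear_combination this
  have hord : orderOf ((q : ZMod p)) ∣ 5 := orderOf_dvd_of_pow_eq_one h1
  have := (Nat.prime_five.eq_one_or_self_of_dvd _ hord)
  rcases this with h | h
  · have : (q : ZMod p) = 1 := orderOf_eq_one_iff.1 h
    have : ((q - 1 : ℕ) : ZMod p) = 0 := by
      rw [Nat.cast_sub (by omega)]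
      simp [this]
    exact (ZMod.natCast_eq_zero_iff _ _).1 this
  · exfalso
    have hqne : (q : ZMod p) ≠ 0 := by
      intro h0
      rw [h0] at h1
      simp at h1
    have hferm : (q : ZMod p) ^ (p - 1) = 1 := ZMod.pow_card_sub_one_eq_one hqne
    have h5 : 5 ∣ p - 1 := h ▸ orderOf_dvd_of_pow_eq_one hferm
    have hp2 : p ≠ 2 := by
      rintro rfl
      simp at h5
    have hodd : p % 2 = 1 := (Nat.Prime.eq_two_or_odd hp).resolve_left hp2
    have hp1 : 1 ≤ p := hp.one_lt.le
    omega

/-- The hybrid lower bound for `q` in terms of `j = ω(q^5 - 1)`: with `s_i` the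
`i`-th smallest prime not congruent to `1 (mod 10)` and `r_i` the `i`-th smallest
prime congruent to `1 (mod 10)`,
`q ≥ min_{0 ≤ m ≤ j} max{ s_1⋯s_m + 1, (s_1⋯s_m · r_1⋯r_{j-m} + 1)^(1/5) }`. -/
theorem stmt12 (q : ℕ) (hq : 2 ≤ q) :
    (q : ℝ) ≥ (Finset.range ((q ^ 5 - 1).primeFactors.card + 1)).inf'
      (by simp)
      (fun m => max
        (((∏ i ∈ Finset.range m, Nat.nth (fun p => p.Prime ∧ p % 10 ≠ 1) i : ℕ) : ℝ) + 1)
        ((((∏ i ∈ Finset.range m, Nat.nth (fun p => p.Prime ∧ p % 10 ≠ 1) i) *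
            (∏ i ∈ Finset.range ((q ^ 5 - 1).primeFactors.card - m),
              Nat.nth (fun p => p.Prime ∧ p % 10 = 1) i) : ℕ) + 1 : ℝ) ^ ((1 : ℝ) / 5))) := by
  have hq5 : 2 ^ 5 ≤ q ^ 5 := Nat.pow_le_pow_left hq 5
  have hpos : 0 < q ^ 5 - 1 := by omega
  set j := (q ^ 5 - 1).primeFactors.card with hj
  set S := (q ^ 5 - 1).primeFactors.filter (fun p => ¬ p % 10 = 1) with hSdef
  set R := (q ^ 5 - 1).primeFactors.filter (fun p => p % 10 = 1) with hRdef
  have hSR : R.card + S.card = j := by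
    rw [hSdef, hRdef, hj, Finset.card_filter_add_card_filter_not]
  -- product over S divides q - 1
  have hSdvd : ∏ p ∈ S, p ∣ q - 1 := by
    apply Finset.prod_primes_dvd
    · intro p hp
      exact (Nat.prime_of_mem_primeFactors (Finset.mem_filter.1 hp).1).prime
    · intro p hp
      obtain ⟨hp1, hp2⟩ := Finset.mem_filter.1 hp
      exact dvd_q_sub_one hq (Nat.prime_of_mem_primeFactors hp1)
        (Nat.dvd_of_mem_primeFactors hp1) hp2
  have hS_le : ∏ p ∈ S, p ≤ q - 1 := Nat.le_of_dvd (by omega) hSdvd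
  -- product over S ∪ R divides q^5 - 1
  have hSRprod : (∏ p ∈ S, p) * ∏ p ∈ R, p ≤ q ^ 5 - 1 := by
    have h1 : (∏ p ∈ R, p) * ∏ p ∈ S, p = ∏ p ∈ (q ^ 5 - 1).primeFactors, p :=
      Finset.prod_filter_mul_prod_filter_not _ _ _
    rw [mul_comm, h1]
    exact Nat.le_of_dvd hpos (Nat.prod_primeFactors_dvd _)
  -- nth prime products are below actual products
  have hA : ∏ i ∈ Finset.range S.card, Nat.nth (fun p => p.Prime ∧ p % 10 ≠ 1) i
      ≤ ∏ p ∈ S, p := by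
    apply prod_nth_le
    intro x hx
    obtain ⟨h1, h2⟩ := Finset.mem_filter.1 hx
    exact ⟨Nat.prime_of_mem_primeFactors h1, h2⟩
  have hB : ∏ i ∈ Finset.range (j - S.card), Nat.nth (fun p => p.Prime ∧ p % 10 = 1) i
      ≤ ∏ p ∈ R, p := by
    have hcard : j - S.card = R.card := by omega
    rw [hcard]
    apply prod_nth_le
    intro x hx
    obtain ⟨h1, h2⟩ := Finset.mem_filter.1 hx
    exact ⟨Nat.prime_of_mem_primeFactors h1, h2⟩
  have hm : S.card ∈ Finset.range (j + 1) := Finset.mem_range.2 (by omega)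
  rw [ge_iff_le]
  refine le_trans (Finset.inf'_le _ hm) ?_
  apply max_le
  · -- first bound
    have h1 : (∏ i ∈ Finset.range S.card, Nat.nth (fun p => p.Prime ∧ p % 10 ≠ 1) i) + 1 ≤ q := by
      have := le_trans hA hS_le
      omega
    exact_mod_cast h1
  · -- second bound
    set P := ∏ i ∈ Finset.range S.card, Nat.nth (fun p => p.Prime ∧ p % 10 ≠ 1) i
    set R' := ∏ i ∈ Finset.range (j - S.card), Nat.nth (fun p => p.Prime ∧ p % 10 = 1) i
    have hle : P * R' + 1 ≤ q ^ 5 := by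
      have := Nat.mul_le_mul hA hB
      omega
    have h1 : ((P * R' : ℕ) : ℝ) + 1 ≤ (q : ℝ) ^ 5 := by exact_mod_cast hle
    calc ((P * R' : ℕ) + 1 : ℝ) ^ ((1 : ℝ) / 5)
        ≤ ((q : ℝ) ^ 5) ^ ((1 : ℝ) / 5) :=
          Real.rpow_le_rpow (by positivity) h1 (by norm_num)
      _ = (q : ℝ) := by
          rw [← Real.rpow_natCast (q : ℝ) 5, ← Real.rpow_mul (by positivity)]
          norm_num
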